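/- Fix a > 0 and ξ ∈ [0,1]. Then for every ζ = x + iy with x > 0 and |y| ≤ x, the series defining ℓ_a(ζ) converges absolutely and Re ℓ_a(x + iy) > a² − a^{2ξ} S. In particular, if a^{2(1−ξ)} > S, then |ℓ_a(x + iy)| > a² (1 − a^{−2(1−ξ)} S) > 0 for all such ζ. -/

import Mathlib

/-- Fix `a > 0` and `ξ ∈ [0,1]`. For every `ζ = x + iy` with `x > 0` and
`|y| ≤ x`, the series defining `ℓ_a ζ` converges absolutely and
`Re (ℓ_a (x+iy)) > a² - a^(2ξ) S`; in particular, if `a^(2(1-ξ)) > S`, then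
`‖ℓ_a (x+iy)‖ > a² (1 - a^(-2(1-ξ)) S) > 0` for all such `ζ`, where `S = ∑ₖ c k / γ k`.
(Sequences are indexed by `ℕ`, so `c 0, γ 0` correspond to `c_1, γ_1`.) -/
theorem stmt_4
    (c γs : ℕ → ℝ)
    (hc : ∀ j, 0 < c j)
    (hγ0 : 0 < γs 0)
    (hγmono : StrictMono γs)
    (hγtop : Filter.Tendsto γs Filter.atTop Filter.atTop)
    (hSsum : Summable fun j => c j / γs j)
    (hS : (∑' j, c j / γs j) < 1)
    (a ξ : ℝ) (ha : 0 < a) (hξ : ξ ∈ Set.Icc (0:ℝ) 1)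
    (ℓ : ℂ → ℂ)
    (hℓ : ∀ ζ, ℓ ζ = ζ ^ 2 + (a : ℂ) ^ 2
        - ((a ^ (2 * ξ) : ℝ) : ℂ) * ∑' k, (c k : ℂ) / (ζ + (γs k : ℂ))) :
    ∀ x y : ℝ, 0 < x → |y| ≤ x →
      (Summable fun k => ‖(c k : ℂ) / (((x : ℂ) + (y : ℂ) * Complex.I) + (γs k : ℂ))‖) ∧
      a ^ 2 - a ^ (2 * ξ) * (∑' j, c j / γs j) < (ℓ ((x : ℂ) + (y : ℂ) * Complex.I)).re ∧
      ((∑' j, c j / γs j) < a ^ (2 * (1 - ξ)) →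
        0 < a ^ 2 * (1 - a ^ (-(2 * (1 - ξ))) * ∑' j, c j / γs j) ∧
        a ^ 2 * (1 - a ^ (-(2 * (1 - ξ))) * ∑' j, c j / γs j)
          < ‖ℓ ((x : ℂ) + (y : ℂ) * Complex.I)‖) := by
  intro x y hx hy
  set ζ : ℂ := (x:ℂ) + (y:ℂ) * Complex.I with hζ
  have hγpos : ∀ k, 0 < γs k := fun k => lt_of_lt_of_le hγ0 (hγmono.monotone (Nat.zero_le k))
  have hre : ∀ k, (ζ + (γs k:ℂ)).re = x + γs k := by
    intro k; simp [hζ]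
  have hnormge : ∀ k, x + γs k ≤ ‖ζ + (γs k:ℂ)‖ := by
    intro k
    calc x + γs k = (ζ + (γs k:ℂ)).re := (hre k).symm
      _ ≤ |(ζ + (γs k:ℂ)).re| := le_abs_self _
      _ ≤ ‖ζ + (γs k:ℂ)‖ := Complex.abs_re_le_norm _
  have hxγpos : ∀ k, 0 < x + γs k := fun k => by linarith [hγpos k]
  have hzne : ∀ k, ζ + (γs k:ℂ) ≠ 0 := by
    intro k h
    have := hnormge k
    rw [h] at this
    simp at this
    nlinarith [hxγpos k]
  have hnorm : ∀ k, ‖(c k : ℂ) / (ζ + (γs k : ℂ))‖ ≤ c k / (x + γs k) := by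
    intro k
    rw [norm_div, Complex.norm_real, Real.norm_eq_abs, abs_of_pos (hc k)]
    exact div_le_div_of_nonneg_left (hc k).le (hxγpos k) (hnormge k)
  have hlt : ∀ k, c k / (x + γs k) < c k / γs k := by
    intro k
    exact div_lt_div_of_pos_left (hc k) (hγpos k) (by linarith [hγpos k])
  have hsum : Summable fun k => ‖(c k : ℂ) / (ζ + (γs k : ℂ))‖ := by
    apply Summable.of_nonneg_of_le (fun k => norm_nonneg _)
      (fun k => (hnorm k).trans (hlt k).le) hSsum
  have hTsum : Summable fun k => (c k : ℂ) / (ζ + (γs k : ℂ)) :=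
    Summable.of_norm hsum
  have hresum : Summable fun k => ((c k : ℂ) / (ζ + (γs k : ℂ))).re := by
    exact (Complex.hasSum_re hTsum.hasSum).summable
  have hrele : ∀ k, ((c k : ℂ) / (ζ + (γs k : ℂ))).re ≤ c k / (x + γs k) := by
    intro k
    calc ((c k : ℂ) / (ζ + (γs k : ℂ))).re ≤ |((c k : ℂ) / (ζ + (γs k : ℂ))).re| := le_abs_self _
      _ ≤ ‖(c k : ℂ) / (ζ + (γs k : ℂ))‖ := Complex.abs_re_le_norm _
      _ ≤ c k / (x + γs k) := hnorm k
  have hTlt : (∑' k, ((c k : ℂ) / (ζ + (γs k : ℂ))).re) < ∑' j, c j / γs j := by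
    apply Summable.tsum_lt_tsum (i := 0) (fun k => (hrele k).trans (hlt k).le)
      ((hrele 0).trans_lt (hlt 0)) hresum hSsum
  have hreT : (∑' k, (c k : ℂ) / (ζ + (γs k : ℂ))).re
      = ∑' k, ((c k : ℂ) / (ζ + (γs k : ℂ))).re := Complex.re_tsum hTsum
  have hreℓ : (ℓ ζ).re = x^2 - y^2 + a^2 - a ^ (2*ξ) * ∑' k, ((c k : ℂ) / (ζ + (γs k : ℂ))).re := by
    rw [hℓ]
    rw [Complex.sub_re, Complex.mul_re, hreT]
    simp only [hζ, Complex.add_re, Complex.sub_re, Complex.mul_re, pow_two,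
      Complex.ofReal_re, Complex.ofReal_im, Complex.add_im, Complex.mul_im,
      Complex.I_re, Complex.I_im, hreT]
    ring
  have hrpos : (0:ℝ) < a ^ (2*ξ) := Real.rpow_pos_of_pos ha _
  have hy2 : y^2 ≤ x^2 := by
    have := sq_abs y
    nlinarith [abs_nonneg y]
  have hmain : a ^ 2 - a ^ (2 * ξ) * (∑' j, c j / γs j) < (ℓ ζ).re := by
    rw [hreℓ]
    nlinarith [mul_lt_mul_of_pos_left hTlt hrpos]
  refine ⟨hsum, hmain, ?_⟩
  intro hSa
  set S : ℝ := ∑' j, c j / γs j with hSdef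
  have hSnn : 0 ≤ S := tsum_nonneg (fun j => div_nonneg (hc j).le (hγpos j).le)
  have hkey : a ^ 2 * (1 - a ^ (-(2 * (1 - ξ))) * S) = a ^ 2 - a ^ (2*ξ) * S := by
    have h2 : (a:ℝ) ^ (2:ℕ) = a ^ ((2:ℝ)) := (Real.rpow_natCast a 2).symm
    rw [mul_sub, mul_one, h2, ← mul_assoc, ← Real.rpow_add ha]
    ring_nf
  have hinvpos : (0:ℝ) < a ^ (-(2 * (1 - ξ))) := Real.rpow_pos_of_pos ha _
  have hlt1 : a ^ (-(2 * (1 - ξ))) * S < 1 := by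
    have := mul_lt_mul_of_pos_left hSa hinvpos
    rwa [← Real.rpow_add ha, neg_add_cancel, Real.rpow_zero] at this
  constructor
  · have : 0 < 1 - a ^ (-(2 * (1 - ξ))) * S := by linarith
    positivity
  · rw [hkey]
    calc a ^ 2 - a ^ (2*ξ) * S < (ℓ ζ).re := hmain
      _ ≤ |(ℓ ζ).re| := le_abs_self _
      _ ≤ ‖ℓ ζ‖ := Complex.abs_re_le_norm _
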